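/- Let G be a compact group, let (A_n)_{n≥1} be an increasing sequence of closed G-invariant subspaces of L²(G) whose union is dense, with the constant functions contained in each A_n. Suppose ξ ∈ L²(G) has ‖ξ‖ = 1, ⟨ξ, 1⟩ = 0, and Σ_{g∈F}‖λ_g ξ − ξ‖² < δ² for some finite F and δ < 1/2. Then there exist n and η ∈ A_n with ‖η‖ = 1, ⟨η, 1⟩ = 0 and Σ_{g∈F}‖λ_g η − η‖² < (δ/(1−δ))² ≤ (2δ)². -/

import Mathlib

/-- Approximation step of Lemmas 2.5 and 2.6: an almost-invariant unit vector orthogonal to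
the invariant vector `ξ₀` can be replaced by one lying in a member of an increasing dense
sequence of closed invariant subspaces, with controlled loss. -/
theorem stmt_12 {G : Type*} [Group G]
    {H : Type*} [NormedAddCommGroup H] [InnerProductSpace ℂ H] [CompleteSpace H]
    (lam : G →* (H →L[ℂ] H)) (hunit : ∀ (g : G) (ξ : H), ‖lam g ξ‖ = ‖ξ‖)
    (ξ₀ : H) (hξ₀ : ‖ξ₀‖ = 1) (hfix : ∀ g : G, lam g ξ₀ = ξ₀)
    (A : ℕ → Submodule ℂ H) (hclosed : ∀ n, IsClosed (A n : Set H))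
    (hinvA : ∀ (n : ℕ) (g : G), ∀ x ∈ A n, lam g x ∈ A n) (hmono : Monotone A)
    (hconst : ∀ n, ξ₀ ∈ A n) (hdense : Dense (⋃ n, (A n : Set H)))
    (ξ : H) (hξ : ‖ξ‖ = 1) (hperp : (inner ℂ ξ₀ ξ : ℂ) = 0)
    (F : Finset G) (δ : ℝ) (hδ0 : 0 < δ) (hδ : δ < 1 / 2)
    (hsum : ∑ g ∈ F, ‖lam g ξ - ξ‖ ^ 2 < δ ^ 2) :
    ∃ n : ℕ, ∃ η ∈ A n, ‖η‖ = 1 ∧ (inner ℂ ξ₀ η : ℂ) = 0 ∧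
      ∑ g ∈ F, ‖lam g η - η‖ ^ 2 < (δ / (1 - δ)) ^ 2 ∧
      (δ / (1 - δ)) ^ 2 ≤ (2 * δ) ^ 2 := by
  -- the trivial last inequality
  have h1δ : (0:ℝ) < 1 - δ := by linarith
  have h2δ : (δ / (1 - δ)) ^ 2 ≤ (2 * δ) ^ 2 := by
    have hle : δ / (1 - δ) ≤ 2 * δ := by
      rw [div_le_iff₀ h1δ]; nlinarith
    have h0 : 0 ≤ δ / (1 - δ) := div_nonneg hδ0.le h1δ.le
    nlinarith
  -- find an approximant in some A n
  obtain ⟨x, hx, hxd⟩ : ∃ x ∈ ⋃ n, (A n : Set H), dist ξ x < δ := by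
    have hmem : ξ ∈ closure (⋃ n, (A n : Set H)) := hdense ξ
    rw [Metric.mem_closure_iff] at hmem
    exact hmem δ hδ0
  obtain ⟨y, ⟨n, rfl⟩, hxn⟩ := hx
  haveI : CompleteSpace (A n) := (hclosed n).completeSpace_coe
  set P := (A n).orthogonalProjectionOnto with hP
  -- lam g as a linear isometry
  have hiso : ∀ (g : G) (u v : H), (inner ℂ (lam g u) (lam g v) : ℂ) = inner ℂ u v := by
    intro g u v
    exact LinearIsometry.inner_map_map ⟨(lam g).toLinearMap, hunit g⟩ u v
  have hginv : ∀ (g : G) (w : H), lam g (lam g⁻¹ w) = w := by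
    intro g w
    have : lam g * lam g⁻¹ = 1 := by rw [← map_mul, mul_inv_cancel, map_one]
    calc lam g (lam g⁻¹ w) = (lam g * lam g⁻¹) w := rfl
      _ = w := by rw [this]; rfl
  -- commutation of the projection with lam g
  have hcomm : ∀ (g : G) (u : H), (P (lam g u) : H) = lam g (P u) := by
    intro g u
    show (A n).starProjection (lam g u) = _
    apply Submodule.eq_starProjection_of_mem_of_inner_eq_zero
    · exact hinvA n g _ (P u).2
    · intro w hw
      have hw' : lam g⁻¹ w ∈ A n := hinvA n g⁻¹ _ hw
      calc (inner ℂ (lam g u - lam g (P u)) w : ℂ)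
          = inner ℂ (lam g (u - P u)) (lam g (lam g⁻¹ w)) := by rw [map_sub, hginv]
        _ = inner ℂ (u - (P u : H)) (lam g⁻¹ w) := hiso g _ _
        _ = 0 := Submodule.starProjection_inner_eq_zero u _ hw'
  -- distance from ξ to its projection
  have hdist : ‖ξ - P ξ‖ < δ := by
    have hle : ‖ξ - P ξ‖ ≤ ‖ξ - x‖ := by
      rw [show ((P ξ : H)) = (A n).starProjection ξ from rfl, Submodule.starProjection_minimal]
      exact ciInf_le ⟨0, fun b ⟨i, hi⟩ => hi ▸ norm_nonneg _⟩ (⟨x, hxn⟩ : A n)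
    rw [dist_eq_norm] at hxd
    exact lt_of_le_of_lt hle hxd
  set r : ℝ := ‖(P ξ : H)‖ with hr
  have hrlb : 1 - δ < r := by
    have : ‖ξ‖ - ‖ξ - P ξ‖ ≤ r := by
      have := norm_sub_norm_le ξ ((P ξ : H))
      have h2 : ‖ξ‖ - ‖(P ξ : H)‖ ≤ ‖ξ - P ξ‖ := norm_sub_norm_le _ _
      linarith
    rw [hξ] at this; linarith
  have hrpos : 0 < r := lt_trans h1δ hrlb
  -- the normalized projection
  refine ⟨n, ((r : ℂ))⁻¹ • (P ξ : H), ?_, ?_, ?_, ?_, h2δ⟩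
  · exact Submodule.smul_mem _ _ (P ξ).2
  · rw [norm_smul]
    simp only [norm_inv, Complex.norm_real, Real.norm_eq_abs, abs_of_pos hrpos]
    rw [← hr]; field_simp
  · rw [inner_smul_right]
    have hsub : (inner ℂ ξ₀ (ξ - (P ξ : H)) : ℂ) = 0 := by
      rw [← inner_eq_zero_symm]
      exact Submodule.starProjection_inner_eq_zero ξ ξ₀ (hconst n)
    have : (inner ℂ ξ₀ (P ξ : H) : ℂ) = inner ℂ ξ₀ ξ := by
      have := hsub
      rw [inner_sub_right, sub_eq_zero] at this
      exact this.symm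
    rw [this, hperp, mul_zero]
  · -- the sum estimate
    have hterm : ∀ g ∈ F, ‖lam g (((r:ℂ))⁻¹ • (P ξ : H)) - ((r:ℂ))⁻¹ • (P ξ : H)‖ ^ 2
        ≤ r⁻¹ ^ 2 * ‖lam g ξ - ξ‖ ^ 2 := by
      intro g _
      have h1 : lam g (((r:ℂ))⁻¹ • (P ξ : H)) - ((r:ℂ))⁻¹ • (P ξ : H)
          = ((r:ℂ))⁻¹ • (lam g (P ξ : H) - (P ξ : H)) := by
        rw [map_smul, smul_sub]
      have h2 : lam g ((P ξ : H)) - (P ξ : H) = (P (lam g ξ - ξ) : H) := by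
        rw [map_sub, ← hcomm]
        push_cast
        ring
      have h3 : ‖(P (lam g ξ - ξ) : H)‖ ≤ ‖lam g ξ - ξ‖ := by
        have := (A n).orthogonalProjectionOnto.le_of_opNorm_le
          ((A n).orthogonalProjectionOnto_norm_le) (lam g ξ - ξ)
        simpa [hP] using this
      rw [h1, norm_smul]
      have h4 : ‖((r:ℂ))⁻¹‖ = r⁻¹ := by
        simp [norm_inv, Complex.norm_real, abs_of_pos hrpos]
      rw [h4, h2, mul_pow]
      have h5 : ‖(P (lam g ξ - ξ) : H)‖ ^ 2 ≤ ‖lam g ξ - ξ‖ ^ 2 :=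
        pow_le_pow_left₀ (norm_nonneg _) h3 2
      have hnn : (0:ℝ) ≤ r⁻¹ ^ 2 := by positivity
      exact mul_le_mul_of_nonneg_left h5 hnn
    calc ∑ g ∈ F, ‖lam g (((r:ℂ))⁻¹ • (P ξ : H)) - ((r:ℂ))⁻¹ • (P ξ : H)‖ ^ 2
        ≤ ∑ g ∈ F, r⁻¹ ^ 2 * ‖lam g ξ - ξ‖ ^ 2 := Finset.sum_le_sum hterm
      _ = r⁻¹ ^ 2 * ∑ g ∈ F, ‖lam g ξ - ξ‖ ^ 2 := by rw [Finset.mul_sum]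
      _ < r⁻¹ ^ 2 * δ ^ 2 := by
          apply mul_lt_mul_of_pos_left hsum; positivity
      _ ≤ (δ / (1 - δ)) ^ 2 := by
          rw [div_pow, div_eq_mul_inv, mul_comm, ← inv_pow]
          have hinv : r⁻¹ ≤ (1 - δ)⁻¹ := inv_anti₀ h1δ hrlb.le
          have := pow_le_pow_left₀ (by positivity : (0:ℝ) ≤ r⁻¹) hinv 2
          nlinarith [sq_nonneg δ, hδ0]
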